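/- In the free associative algebra A_3 on three generators over a field of characteristic zero, the product of ideals M_2(A_3)·M_2(A_3) is contained in M_3(A_3) but NOT contained in M_4(A_3). (That is, I(A_3, (2,2)) = 3.) -/

import Mathlib

/-- Lower central series of an associative unital algebra `R` over `K`, as `K`-submodules:
`lowerCentral K R 1 = ⊤` and, for `i ≥ 1`, `lowerCentral K R (i+1)` is the `K`-linear span of
the brackets `⁅a, l⁆ = a * l - l * a` with `a : R` and `l ∈ lowerCentral K R i`.
(By convention `lowerCentral K R 0 = ⊤` as well; only indices `i ≥ 1` are used.) -/
def lowerCentral (K : Type*) [CommRing K] (R : Type*) [Ring R] [Algebra K R] : ℕ → Submodule K R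
  | 0 => ⊤
  | 1 => ⊤
  | n + 2 => Submodule.span K
      {x : R | ∃ a : R, ∃ l ∈ lowerCentral K R (n + 1), x = a * l - l * a}

/-- `lcsIdeal K R i` is the two-sided ideal `M_i(R)` of `R` generated by `lowerCentral K R i`,
realized as the `K`-submodule spanned by all products `a * l * b` with `a b : R` and
`l ∈ lowerCentral K R i`.  Products of such ideals are taken using the multiplication of
`Submodule K R` (the span of pairwise products), which agrees with the product of
two-sided ideals. -/
def lcsIdeal (K : Type*) [CommRing K] (R : Type*) [Ring R] [Algebra K R] (i : ℕ) : Submodule K R :=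
  Submodule.span K {x : R | ∃ a b : R, ∃ l ∈ lowerCentral K R i, x = a * l * b}

section Part1
variable {K : Type*} [Field K] [CharZero K]
local notation "A" => FreeAlgebra K (Fin 3)
local notation "L" => lowerCentral K (FreeAlgebra K (Fin 3))
local notation "M" => lcsIdeal K (FreeAlgebra K (Fin 3))

lemma mem_L2 (a b : A) : a * b - b * a ∈ L 2 :=
  Submodule.subset_span ⟨a, b, by simp [lowerCentral], rfl⟩

lemma mem_L3 {l : A} (hl : l ∈ L 2) (a : A) : a * l - l * a ∈ L 3 :=
  Submodule.subset_span ⟨a, l, hl, rfl⟩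

lemma mem_M3 (a b : A) {l : A} (hl : l ∈ L 3) : a * l * b ∈ M 3 :=
  Submodule.subset_span ⟨a, b, l, hl, rfl⟩

lemma M3_mul_left (a : A) {x : A} (hx : x ∈ M 3) : a * x ∈ M 3 := by
  induction hx using Submodule.span_induction with
  | mem x hx => obtain ⟨p, q, l, hl, rfl⟩ := hx
                have := mem_M3 (a*p) q hl; rw [show a*p*l*q = a*(p*l*q) by noncomm_ring] at this
                exact this
  | zero => simp
  | add x y hx hy ihx ihy => rw [mul_add]; exact add_mem ihx ihy
  | smul k x hx ih => rw [mul_smul_comm]; exact Submodule.smul_mem _ _ ih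

lemma M3_mul_right (b : A) {x : A} (hx : x ∈ M 3) : x * b ∈ M 3 := by
  induction hx using Submodule.span_induction with
  | mem x hx => obtain ⟨p, q, l, hl, rfl⟩ := hx
                have := mem_M3 p (q*b) hl; rw [show p*l*(q*b) = p*l*q*b by noncomm_ring] at this
                exact this
  | zero => simp
  | add x y hx hy ihx ihy => rw [add_mul]; exact add_mem ihx ihy
  | smul k x hx ih => rw [smul_mul_assoc]; exact Submodule.smul_mem _ _ ih

lemma L3_le_M3 {l : A} (hl : l ∈ L 3) : l ∈ M 3 := by
  have := mem_M3 1 1 hl; simpa using this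

-- (∗∗): [x,z][y,w] + [y,z][x,w] ∈ M 3
lemma swap13 (x z y w : A) :
    (x*z - z*x) * (y*w - w*y) + (y*z - z*y) * (x*w - w*x) ∈ M 3 := by
  have hE : x * ((y*(z*w) - (z*w)*y)) - ((y*(z*w) - (z*w)*y)) * x ∈ L 3 :=
    mem_L3 (mem_L2 y (z*w)) x
  have h1 : z * (x*(y*w - w*y) - (y*w - w*y)*x) * 1 ∈ M 3 :=
    mem_M3 z 1 (mem_L3 (mem_L2 y w) x)
  have h2 : (1 : A) * (x*(y*z - z*y) - (y*z - z*y)*x) * w ∈ M 3 :=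
    mem_M3 1 w (mem_L3 (mem_L2 y z) x)
  have hid : (x*z - z*x) * (y*w - w*y) + (y*z - z*y) * (x*w - w*x) =
      (x * ((y*(z*w) - (z*w)*y)) - ((y*(z*w) - (z*w)*y)) * x)
      - z * (x*(y*w - w*y) - (y*w - w*y)*x) * 1
      - (1 : A) * (x*(y*z - z*y) - (y*z - z*y)*x) * w := by noncomm_ring
  rw [hid]
  exact sub_mem (sub_mem (L3_le_M3 hE) h1) h2

end Part1

section Part1b
set_option linter.unusedSectionVars false
variable {K : Type*} [Field K] [CharZero K]
local notation "A" => FreeAlgebra K (Fin 3)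
local notation "L" => lowerCentral K (FreeAlgebra K (Fin 3))
local notation "M" => lcsIdeal K (FreeAlgebra K (Fin 3))

lemma half_mem {x : A} (h : x + x ∈ M 3) : x ∈ M 3 := by
  have := Submodule.smul_mem (M 3) ((2:K)⁻¹) h
  rwa [← two_smul K x, smul_smul, inv_mul_cancel₀ (two_ne_zero), one_smul] at this

lemma caseA (a b d : A) : (a*b - b*a) * (a*d - d*a) ∈ M 3 := by
  apply half_mem
  have := swap13 a b a d
  rwa [show (a*b - b*a) * (a*d - d*a) + (a*b - b*a) * (a*d - d*a)
      = (a*b - b*a) * (a*d - d*a) + (a*b - b*a) * (a*d - d*a) from rfl]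

lemma caseJK (a b d : A) : (a*b - b*a) * (b*d - d*b) ∈ M 3 := by
  have := swap13 a b b d
  simpa using this

end Part1b

section Part1c
set_option linter.unusedSectionVars false
variable {K : Type*} [Field K] [CharZero K]
local notation "A" => FreeAlgebra K (Fin 3)
local notation "L" => lowerCentral K (FreeAlgebra K (Fin 3))
local notation "M" => lcsIdeal K (FreeAlgebra K (Fin 3))
local notation "g" => (FreeAlgebra.ι K : Fin 3 → FreeAlgebra K (Fin 3))

lemma genQ (i j k l : Fin 3) : (g i * g j - g j * g i) * (g k * g l - g l * g k) ∈ M 3 := by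
  have hcase : i = j ∨ k = l ∨ i = k ∨ i = l ∨ j = k ∨ j = l := by omega
  rcases hcase with h | h | h | h | h | h <;> subst h
  · rw [show (g i * g i - g i * g i) * (g k * g l - g l * g k) = 0 by noncomm_ring]
    exact zero_mem _
  · rw [show (g i * g j - g j * g i) * (g k * g k - g k * g k) = 0 by noncomm_ring]
    exact zero_mem _
  · exact caseA (g i) (g j) (g l)
  · rw [show (g i * g j - g j * g i) * (g k * g i - g i * g k)
        = -((g i * g j - g j * g i) * (g i * g k - g k * g i)) by noncomm_ring]
    exact neg_mem (caseA (g i) (g j) (g k))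
  · exact caseJK (g i) (g j) (g l)
  · rw [show (g i * g j - g j * g i) * (g k * g j - g j * g k)
        = -((g i * g j - g j * g i) * (g j * g k - g k * g j)) by noncomm_ring]
    exact neg_mem (caseJK (g i) (g j) (g k))

end Part1c

section Part1d
set_option linter.unusedSectionVars false
variable {K : Type*} [Field K] [CharZero K]
local notation "A" => FreeAlgebra K (Fin 3)
local notation "L" => lowerCentral K (FreeAlgebra K (Fin 3))
local notation "M" => lcsIdeal K (FreeAlgebra K (Fin 3))
local notation "g" => (FreeAlgebra.ι K : Fin 3 → FreeAlgebra K (Fin 3))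

lemma Q4 (i j k : Fin 3) (d : A) :
    (g i * g j - g j * g i) * (g k * d - d * g k) ∈ M 3 := by
  induction d using FreeAlgebra.induction with
  | grade0 r =>
    rw [show g k * algebraMap K _ r - algebraMap K _ r * g k = 0 by
      rw [← Algebra.commutes r (g k)]; exact sub_self _, mul_zero]
    exact zero_mem _
  | grade1 x => exact genQ i j k x
  | mul u v hu hv =>
    rw [show (g i * g j - g j * g i) * (g k * (u*v) - (u*v) * g k)
      = u * ((g i * g j - g j * g i) * (g k * v - v * g k))
        - (1:A) * (u * (g i * g j - g j * g i) - (g i * g j - g j * g i) * u) * (g k * v - v * g k)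
        + ((g i * g j - g j * g i) * (g k * u - u * g k)) * v by noncomm_ring]
    exact add_mem (sub_mem (M3_mul_left u hv)
      (mem_M3 1 _ (mem_L3 (mem_L2 (g i) (g j)) u))) (M3_mul_right v hu)
  | add u v hu hv =>
    rw [show (g i * g j - g j * g i) * (g k * (u+v) - (u+v) * g k)
      = (g i * g j - g j * g i) * (g k * u - u * g k)
        + (g i * g j - g j * g i) * (g k * v - v * g k) by noncomm_ring]
    exact add_mem hu hv

lemma Q3 (i j : Fin 3) (c d : A) :
    (g i * g j - g j * g i) * (c * d - d * c) ∈ M 3 := by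
  induction c using FreeAlgebra.induction with
  | grade0 r =>
    rw [show algebraMap K _ r * d - d * algebraMap K _ r = 0 by
      rw [Algebra.commutes r d]; exact sub_self _, mul_zero]
    exact zero_mem _
  | grade1 x => exact Q4 i j x d
  | mul u v hu hv =>
    rw [show (g i * g j - g j * g i) * ((u*v) * d - d * (u*v))
      = u * ((g i * g j - g j * g i) * (v * d - d * v))
        - (1:A) * (u * (g i * g j - g j * g i) - (g i * g j - g j * g i) * u) * (v * d - d * v)
        + ((g i * g j - g j * g i) * (u * d - d * u)) * v by noncomm_ring]
    exact add_mem (sub_mem (M3_mul_left u hv)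
      (mem_M3 1 _ (mem_L3 (mem_L2 (g i) (g j)) u))) (M3_mul_right v hu)
  | add u v hu hv =>
    rw [show (g i * g j - g j * g i) * ((u+v) * d - d * (u+v))
      = (g i * g j - g j * g i) * (u * d - d * u)
        + (g i * g j - g j * g i) * (v * d - d * v) by noncomm_ring]
    exact add_mem hu hv

lemma Q2 (i : Fin 3) (b c d : A) :
    (g i * b - b * g i) * (c * d - d * c) ∈ M 3 := by
  induction b using FreeAlgebra.induction with
  | grade0 r =>
    rw [show g i * algebraMap K _ r - algebraMap K _ r * g i = 0 by
      rw [← Algebra.commutes r (g i)]; exact sub_self _, zero_mul]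
    exact zero_mem _
  | grade1 x => exact Q3 i x c d
  | mul u v hu hv =>
    rw [show (g i * (u*v) - (u*v) * g i) * (c * d - d * c)
      = u * ((g i * v - v * g i) * (c * d - d * c))
        + ((g i * u - u * g i) * (c * d - d * c)) * v
        + (g i * u - u * g i) * (v * (c * d - d * c) - (c * d - d * c) * v) * 1
        by noncomm_ring]
    exact add_mem (add_mem (M3_mul_left u hv) (M3_mul_right v hu))
      (mem_M3 _ 1 (mem_L3 (mem_L2 c d) v))
  | add u v hu hv =>
    rw [show (g i * (u+v) - (u+v) * g i) * (c * d - d * c)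
      = (g i * u - u * g i) * (c * d - d * c)
        + (g i * v - v * g i) * (c * d - d * c) by noncomm_ring]
    exact add_mem hu hv

lemma Qmem (a b c d : A) : (a * b - b * a) * (c * d - d * c) ∈ M 3 := by
  induction a using FreeAlgebra.induction with
  | grade0 r =>
    rw [show algebraMap K _ r * b - b * algebraMap K _ r = 0 by
      rw [Algebra.commutes r b]; exact sub_self _, zero_mul]
    exact zero_mem _
  | grade1 x => exact Q2 x b c d
  | mul u v hu hv =>
    rw [show ((u*v) * b - b * (u*v)) * (c * d - d * c)
      = u * ((v * b - b * v) * (c * d - d * c))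
        + ((u * b - b * u) * (c * d - d * c)) * v
        + (u * b - b * u) * (v * (c * d - d * c) - (c * d - d * c) * v) * 1
        by noncomm_ring]
    exact add_mem (add_mem (M3_mul_left u hv) (M3_mul_right v hu))
      (mem_M3 _ 1 (mem_L3 (mem_L2 c d) v))
  | add u v hu hv =>
    rw [show ((u+v) * b - b * (u+v)) * (c * d - d * c)
      = (u * b - b * u) * (c * d - d * c)
        + (v * b - b * v) * (c * d - d * c) by noncomm_ring]
    exact add_mem hu hv

end Part1d

section Part1e
set_option linter.unusedSectionVars false
variable {K : Type*} [Field K] [CharZero K]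
local notation "A" => FreeAlgebra K (Fin 3)
local notation "L" => lowerCentral K (FreeAlgebra K (Fin 3))
local notation "M" => lcsIdeal K (FreeAlgebra K (Fin 3))

-- base: (a * l * b) * (a' * l' * b') ∈ M 3 for l, l' ∈ L 2
lemma base22 (a b a' b' : A) {l l' : A} (hl : l ∈ L 2) (hl' : l' ∈ L 2) :
    a * l * b * (a' * l' * b') ∈ M 3 := by
  induction hl using Submodule.span_induction with
  | mem x hx =>
    induction hl' using Submodule.span_induction with
    | mem y hy =>
      obtain ⟨c, d, -, rfl⟩ := hx
      obtain ⟨c', d', -, rfl⟩ := hy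
      rw [show a * (c*d - d*c) * b * (a' * (c'*d' - d'*c') * b')
        = (a * (b * a')) * ((c*d - d*c) * (c'*d' - d'*c')) * b'
          - a * ((b*a') * (c*d - d*c) - (c*d - d*c) * (b*a')) * ((c'*d' - d'*c') * b')
          by noncomm_ring]
      refine sub_mem ?_ (mem_M3 a _ (mem_L3 (mem_L2 c d) (b*a')))
      exact M3_mul_right b' (M3_mul_left (a * (b*a')) (Qmem c d c' d'))
    | zero => rw [show a * x * b * (a' * (0:A) * b') = 0 by noncomm_ring]; exact zero_mem _
    | add y z hy hz ihy ihz =>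
      rw [show a * x * b * (a' * (y+z) * b')
        = a * x * b * (a' * y * b') + a * x * b * (a' * z * b') by noncomm_ring]
      exact add_mem ihy ihz
    | smul k y hy ih =>
      rw [show a * x * b * (a' * (k • y) * b') = k • (a * x * b * (a' * y * b')) by
        simp [mul_smul_comm, smul_mul_assoc]]
      exact Submodule.smul_mem _ _ ih
  | zero => rw [show a * (0:A) * b * (a' * l' * b') = 0 by noncomm_ring]; exact zero_mem _
  | add y z hy hz ihy ihz =>
    rw [show a * (y+z) * b * (a' * l' * b')
      = a * y * b * (a' * l' * b') + a * z * b * (a' * l' * b') by noncomm_ring]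
    exact add_mem ihy ihz
  | smul k y hy ih =>
    rw [show a * (k • y) * b * (a' * l' * b') = k • (a * y * b * (a' * l' * b')) by
      simp [mul_smul_comm, smul_mul_assoc]]
    exact Submodule.smul_mem _ _ ih

theorem part1 : M 2 * M 2 ≤ M 3 := by
  rw [Submodule.mul_le]
  intro m hm n hn
  induction hm using Submodule.span_induction with
  | mem x hx =>
    induction hn using Submodule.span_induction with
    | mem y hy =>
      obtain ⟨a, b, l, hl, rfl⟩ := hx
      obtain ⟨a', b', l', hl', rfl⟩ := hy
      exact base22 a b a' b' hl hl'
    | zero => rw [mul_zero]; exact zero_mem _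
    | add y z hy hz ihy ihz => rw [mul_add]; exact add_mem ihy ihz
    | smul k y hy ih => rw [mul_smul_comm]; exact Submodule.smul_mem _ _ ih
  | zero => rw [zero_mul]; exact zero_mem _
  | add y z hy hz ihy ihz => rw [add_mul]; exact add_mem ihy ihz
  | smul k y hy ih => rw [smul_mul_assoc]; exact Submodule.smul_mem _ _ ih

end Part1e


noncomputable section P2
variable (K : Type*) [Field K] [CharZero K]

def wd (l : List (Fin 3)) : FreeAlgebra K (Fin 3) := (l.map (FreeAlgebra.ι K)).prod

lemma wd_append (l₁ l₂ : List (Fin 3)) : wd K (l₁ ++ l₂) = wd K l₁ * wd K l₂ := by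
  simp [wd]

def Cf (l : List (Fin 3)) : ℤ :=
  if l = [0,1,0,2] then -1 else if l = [1,0,0,2] then -2 else if l = [0,2,0,1] then 1 else 0

def fK : FreeAlgebra K (Fin 3) →ₗ[K] K :=
  (Finsupp.linearCombination K (fun w : FreeMonoid (Fin 3) => (Cf (FreeMonoid.toList w) : K))).comp
    ((MonoidAlgebra.coeffLinearEquiv K).toLinearMap.comp
    ((FreeAlgebra.equivMonoidAlgebraFreeMonoid (R := K) (X := Fin 3))).toLinearMap)

lemma equiv_wd (l : List (Fin 3)) :
    (FreeAlgebra.equivMonoidAlgebraFreeMonoid (R := K) (X := Fin 3)) (wd K l)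
      = MonoidAlgebra.single (FreeMonoid.ofList l) 1 := by
  induction l with
  | nil => simpa [wd] using MonoidAlgebra.one_def
  | cons i t ih =>
    have : wd K (i :: t) = FreeAlgebra.ι K i * wd K t := by simp [wd]
    rw [this, map_mul, ih]
    have hι : (FreeAlgebra.equivMonoidAlgebraFreeMonoid (R := K) (X := Fin 3)) (FreeAlgebra.ι K i)
        = MonoidAlgebra.single (FreeMonoid.of i) 1 := by
      simp [FreeAlgebra.equivMonoidAlgebraFreeMonoid, MonoidAlgebra.of_apply]
    rw [hι, MonoidAlgebra.single_mul_single, one_mul, ← FreeMonoid.ofList_cons]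

lemma fK_wd (l : List (Fin 3)) : fK K (wd K l) = (Cf l : K) := by
  have h2 : fK K (wd K l) = (Finsupp.linearCombination K
      fun w : FreeMonoid (Fin 3) => (Cf (FreeMonoid.toList w) : K))
        (MonoidAlgebra.single (FreeMonoid.ofList l) (1:K)).coeff := by
    rw [fK, LinearMap.comp_apply, LinearMap.comp_apply]
    exact congrArg (fun y => (Finsupp.linearCombination K
      fun w : FreeMonoid (Fin 3) => (Cf (FreeMonoid.toList w) : K))
        (MonoidAlgebra.coeffLinearEquiv K y)) (equiv_wd K l)
  rw [h2]
  rw [show (MonoidAlgebra.single (FreeMonoid.ofList l) (1:K)).coeff = Finsupp.single (FreeMonoid.ofList l) (1:K) from rfl]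
  rw [Finsupp.linearCombination_single, FreeMonoid.toList_ofList, one_smul]

end P2

lemma Cf_eq_zero {l : List (Fin 3)} (h : l.length ≠ 4) : Cf l = 0 := by
  unfold Cf
  split_ifs with h1 h2 h3
  · subst h1; simp at h
  · subst h2; simp at h
  · subst h3; simp at h
  · rfl

lemma Clist (P Aa Bb Cc Dd Q : List (Fin 3)) (hA : Aa ≠ []) (hB : Bb ≠ [])
    (hC : Cc ≠ []) (hD : Dd ≠ []) :
    Cf (P++Bb++Aa++Cc++Dd++Q) - Cf (P++Bb++Aa++Dd++Cc++Q)
      - Cf (P++Bb++Cc++Dd++Aa++Q) + Cf (P++Bb++Dd++Cc++Aa++Q)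
      - Cf (P++Aa++Cc++Dd++Bb++Q) + Cf (P++Aa++Dd++Cc++Bb++Q)
      + Cf (P++Cc++Dd++Aa++Bb++Q) - Cf (P++Dd++Cc++Aa++Bb++Q) = 0 := by
  by_cases h4 : P.length + Aa.length + Bb.length + Cc.length + Dd.length + Q.length = 4
  · have hA1 : Aa.length = 1 ∧ Bb.length = 1 ∧ Cc.length = 1 ∧ Dd.length = 1
        ∧ P.length = 0 ∧ Q.length = 0 := by
      have := List.length_pos_iff.mpr hA
      have := List.length_pos_iff.mpr hB
      have := List.length_pos_iff.mpr hC
      have := List.length_pos_iff.mpr hD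
      omega
    obtain ⟨a, rfl⟩ := List.length_eq_one_iff.mp hA1.1
    obtain ⟨b, rfl⟩ := List.length_eq_one_iff.mp hA1.2.1
    obtain ⟨c, rfl⟩ := List.length_eq_one_iff.mp hA1.2.2.1
    obtain ⟨d, rfl⟩ := List.length_eq_one_iff.mp hA1.2.2.2.1
    obtain rfl := List.length_eq_zero_iff.mp hA1.2.2.2.2.1
    obtain rfl := List.length_eq_zero_iff.mp hA1.2.2.2.2.2
    clear hA hB hC hD h4 hA1
    revert a b c d; decide
  · rw [Cf_eq_zero (by simp [List.length_append]; omega),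
      Cf_eq_zero (by simp [List.length_append]; omega),
      Cf_eq_zero (by simp [List.length_append]; omega),
      Cf_eq_zero (by simp [List.length_append]; omega),
      Cf_eq_zero (by simp [List.length_append]; omega),
      Cf_eq_zero (by simp [List.length_append]; omega),
      Cf_eq_zero (by simp [List.length_append]; omega),
      Cf_eq_zero (by simp [List.length_append]; omega)]
    ring

lemma Clist' (P Aa Bb Cc Dd Q : List (Fin 3)) :
    Cf (P++Bb++Aa++Cc++Dd++Q) - Cf (P++Bb++Aa++Dd++Cc++Q)
      - Cf (P++Bb++Cc++Dd++Aa++Q) + Cf (P++Bb++Dd++Cc++Aa++Q)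
      - Cf (P++Aa++Cc++Dd++Bb++Q) + Cf (P++Aa++Dd++Cc++Bb++Q)
      + Cf (P++Cc++Dd++Aa++Bb++Q) - Cf (P++Dd++Cc++Aa++Bb++Q) = 0 := by
  by_cases hB : Bb = []
  · subst hB; simp only [List.nil_append, List.append_nil]; ring
  by_cases hA : Aa = []
  · subst hA; simp only [List.nil_append, List.append_nil]; ring
  by_cases hC : Cc = []
  · subst hC; simp only [List.nil_append, List.append_nil]; ring
  by_cases hD : Dd = []
  · subst hD; simp only [List.nil_append, List.append_nil]; ring
  exact Clist P Aa Bb Cc Dd Q hA hB hC hD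

section P2b
set_option linter.unusedSectionVars false
variable (K : Type*) [Field K] [CharZero K]
local notation "A" => FreeAlgebra K (Fin 3)

def Br (b a c d : A) : A :=
  b * (a*(c*d - d*c) - (c*d - d*c)*a) - (a*(c*d - d*c) - (c*d - d*c)*a) * b

lemma base_words (P Aa Bb Cc Dd Q : List (Fin 3)) :
    fK K (wd K P * Br K (wd K Bb) (wd K Aa) (wd K Cc) (wd K Dd) * wd K Q) = 0 := by
  have hexp : wd K P * Br K (wd K Bb) (wd K Aa) (wd K Cc) (wd K Dd) * wd K Q
      = wd K (P++Bb++Aa++Cc++Dd++Q) - wd K (P++Bb++Aa++Dd++Cc++Q)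
      - wd K (P++Bb++Cc++Dd++Aa++Q) + wd K (P++Bb++Dd++Cc++Aa++Q)
      - wd K (P++Aa++Cc++Dd++Bb++Q) + wd K (P++Aa++Dd++Cc++Bb++Q)
      + wd K (P++Cc++Dd++Aa++Bb++Q) - wd K (P++Dd++Cc++Aa++Bb++Q) := by
    simp only [wd_append, Br]; noncomm_ring
  rw [hexp]
  simp only [map_add, map_sub, fK_wd]
  have := Clist' P Aa Bb Cc Dd Q
  push_cast
  exact_mod_cast congrArg (fun z : ℤ => (z : K)) this
end P2b

section P2c
set_option linter.unusedSectionVars false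
variable (K : Type*) [Field K] [CharZero K]
local notation "A" => FreeAlgebra K (Fin 3)

lemma span_words : Submodule.span K (Set.range (wd K)) = ⊤ := by
  refine le_antisymm le_top ?_
  intro x hxtop
  clear hxtop
  have mulmem : ∀ u ∈ Submodule.span K (Set.range (wd K)),
      ∀ v ∈ Submodule.span K (Set.range (wd K)),
      u * v ∈ Submodule.span K (Set.range (wd K)) := by
    intro u hu v hv
    induction hu using Submodule.span_induction with
    | mem y hy =>
      induction hv using Submodule.span_induction with
      | mem z hz =>
        obtain ⟨ly, rfl⟩ := hy
        obtain ⟨lz, rfl⟩ := hz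
        exact Submodule.subset_span ⟨ly ++ lz, wd_append K ly lz⟩
      | zero => rw [mul_zero]; exact zero_mem _
      | add p q hp hq ihp ihq => rw [mul_add]; exact add_mem ihp ihq
      | smul k p hp ih => rw [mul_smul_comm]; exact Submodule.smul_mem _ _ ih
    | zero => rw [zero_mul]; exact zero_mem _
    | add p q hp hq ihp ihq => rw [add_mul]; exact add_mem ihp ihq
    | smul k p hp ih => rw [smul_mul_assoc]; exact Submodule.smul_mem _ _ ih
  induction x using FreeAlgebra.induction with
  | grade0 r =>
    rw [Algebra.algebraMap_eq_smul_one]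
    exact Submodule.smul_mem _ _ (Submodule.subset_span ⟨[], by simp [wd]⟩)
  | grade1 i => exact Submodule.subset_span ⟨[i], by simp [wd]⟩
  | mul u v hu hv => exact mulmem u hu v hv
  | add u v hu hv => exact add_mem hu hv

theorem word_ind {P : FreeAlgebra K (Fin 3) → Prop}
    (hw : ∀ l : List (Fin 3), P (wd K l)) (h0 : P 0)
    (hadd : ∀ x y, P x → P y → P (x + y))
    (hsmul : ∀ (k : K) (x), P x → P (k • x)) (x : A) : P x := by
  have hx : x ∈ Submodule.span K (Set.range (wd K)) := by rw [span_words]; trivial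
  induction hx using Submodule.span_induction with
  | mem y hy => obtain ⟨l, rfl⟩ := hy; exact hw l
  | zero => exact h0
  | add p q hp hq ihp ihq => exact hadd p q ihp ihq
  | smul k p hp ih => exact hsmul k p ih
end P2c

section P2d
set_option linter.unusedSectionVars false
variable (K : Type*) [Field K] [CharZero K]
local notation "A" => FreeAlgebra K (Fin 3)

lemma k1 (P B Aa C D : List (Fin 3)) (q : A) :
    fK K (wd K P * Br K (wd K B) (wd K Aa) (wd K C) (wd K D) * q) = 0 := by
  induction q using word_ind with
  | hw l => exact base_words K P Aa B C D l
  | h0 => rw [mul_zero, map_zero]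
  | hadd x y hx hy => rw [mul_add, map_add, hx, hy, add_zero]
  | hsmul k x hx => rw [mul_smul_comm, map_smul, hx, smul_zero]

lemma k2 (P B Aa C : List (Fin 3)) (d q : A) :
    fK K (wd K P * Br K (wd K B) (wd K Aa) (wd K C) d * q) = 0 := by
  induction d using word_ind with
  | hw l => exact k1 K P B Aa C l q
  | h0 => rw [show wd K P * Br K (wd K B) (wd K Aa) (wd K C) 0 * q = 0 by
      unfold Br; noncomm_ring, map_zero]
  | hadd x y hx hy =>
    rw [show wd K P * Br K (wd K B) (wd K Aa) (wd K C) (x+y) * q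
      = wd K P * Br K (wd K B) (wd K Aa) (wd K C) x * q
        + wd K P * Br K (wd K B) (wd K Aa) (wd K C) y * q by unfold Br; noncomm_ring,
      map_add, hx, hy, add_zero]
  | hsmul k x hx =>
    rw [show wd K P * Br K (wd K B) (wd K Aa) (wd K C) (k • x) * q
      = k • (wd K P * Br K (wd K B) (wd K Aa) (wd K C) x * q) by
        unfold Br; simp only [mul_smul_comm, smul_mul_assoc, smul_sub, sub_mul, mul_sub],
      map_smul, hx, smul_zero]

lemma k3 (P B Aa : List (Fin 3)) (c d q : A) :
    fK K (wd K P * Br K (wd K B) (wd K Aa) c d * q) = 0 := by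
  induction c using word_ind with
  | hw l => exact k2 K P B Aa l d q
  | h0 => rw [show wd K P * Br K (wd K B) (wd K Aa) 0 d * q = 0 by
      unfold Br; noncomm_ring, map_zero]
  | hadd x y hx hy =>
    rw [show wd K P * Br K (wd K B) (wd K Aa) (x+y) d * q
      = wd K P * Br K (wd K B) (wd K Aa) x d * q
        + wd K P * Br K (wd K B) (wd K Aa) y d * q by unfold Br; noncomm_ring,
      map_add, hx, hy, add_zero]
  | hsmul k x hx =>
    rw [show wd K P * Br K (wd K B) (wd K Aa) (k • x) d * q
      = k • (wd K P * Br K (wd K B) (wd K Aa) x d * q) by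
        unfold Br; simp only [mul_smul_comm, smul_mul_assoc, smul_sub, sub_mul, mul_sub],
      map_smul, hx, smul_zero]

lemma k4 (P B : List (Fin 3)) (a c d q : A) :
    fK K (wd K P * Br K (wd K B) a c d * q) = 0 := by
  induction a using word_ind with
  | hw l => exact k3 K P B l c d q
  | h0 => rw [show wd K P * Br K (wd K B) 0 c d * q = 0 by
      unfold Br; noncomm_ring, map_zero]
  | hadd x y hx hy =>
    rw [show wd K P * Br K (wd K B) (x+y) c d * q
      = wd K P * Br K (wd K B) x c d * q
        + wd K P * Br K (wd K B) y c d * q by unfold Br; noncomm_ring,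
      map_add, hx, hy, add_zero]
  | hsmul k x hx =>
    rw [show wd K P * Br K (wd K B) (k • x) c d * q
      = k • (wd K P * Br K (wd K B) x c d * q) by
        unfold Br; simp only [mul_smul_comm, smul_mul_assoc, smul_sub, sub_mul, mul_sub],
      map_smul, hx, smul_zero]

lemma k5 (P : List (Fin 3)) (b a c d q : A) :
    fK K (wd K P * Br K b a c d * q) = 0 := by
  induction b using word_ind with
  | hw l => exact k4 K P l a c d q
  | h0 => rw [show wd K P * Br K 0 a c d * q = 0 by
      unfold Br; noncomm_ring, map_zero]
  | hadd x y hx hy =>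
    rw [show wd K P * Br K (x+y) a c d * q
      = wd K P * Br K x a c d * q + wd K P * Br K y a c d * q by unfold Br; noncomm_ring,
      map_add, hx, hy, add_zero]
  | hsmul k x hx =>
    rw [show wd K P * Br K (k • x) a c d * q
      = k • (wd K P * Br K x a c d * q) by
        unfold Br; simp only [mul_smul_comm, smul_mul_assoc, smul_sub, sub_mul, mul_sub],
      map_smul, hx, smul_zero]

lemma k6 (p b a c d q : A) : fK K (p * Br K b a c d * q) = 0 := by
  induction p using word_ind with
  | hw l => exact k5 K l b a c d q
  | h0 => rw [zero_mul, zero_mul, map_zero]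
  | hadd x y hx hy => rw [add_mul, add_mul, map_add, hx, hy, add_zero]
  | hsmul k x hx => rw [smul_mul_assoc, smul_mul_assoc, map_smul, hx, smul_zero]
end P2d


section P2e
set_option linter.unusedSectionVars false
variable (K : Type*) [Field K] [CharZero K]
local notation "A" => FreeAlgebra K (Fin 3)
local notation "L" => lowerCentral K (FreeAlgebra K (Fin 3))
local notation "M" => lcsIdeal K (FreeAlgebra K (Fin 3))

lemma U_L2 {x : FreeAlgebra K (Fin 3)} (hx : x ∈ L 2) :
    ∀ a b p q : A, fK K (p * (b * (a*x - x*a) - (a*x - x*a) * b) * q) = 0 := by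
  induction hx using Submodule.span_induction with
  | mem y hy =>
    obtain ⟨c, d, -, rfl⟩ := hy
    intro a b p q
    exact k6 K p b a c d q
  | zero =>
    intro a b p q
    rw [show p * (b * (a*(0:A) - (0:A)*a) - (a*(0:A) - (0:A)*a) * b) * q = 0 by noncomm_ring,
      map_zero]
  | add y z hy hz ihy ihz =>
    intro a b p q
    rw [show p * (b * (a*(y+z) - (y+z)*a) - (a*(y+z) - (y+z)*a) * b) * q
      = p * (b * (a*y - y*a) - (a*y - y*a) * b) * q
        + p * (b * (a*z - z*a) - (a*z - z*a) * b) * q by noncomm_ring,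
      map_add, ihy a b p q, ihz a b p q, add_zero]
  | smul k y hy ih =>
    intro a b p q
    rw [show p * (b * (a*(k•y) - (k•y)*a) - (a*(k•y) - (k•y)*a) * b) * q
      = k • (p * (b * (a*y - y*a) - (a*y - y*a) * b) * q) by
        simp only [mul_smul_comm, smul_mul_assoc, smul_sub, sub_mul, mul_sub],
      map_smul, ih a b p q, smul_zero]

lemma U_L3 {y : FreeAlgebra K (Fin 3)} (hy : y ∈ L 3) :
    ∀ b p q : A, fK K (p * (b * y - y * b) * q) = 0 := by
  induction hy using Submodule.span_induction with
  | mem z hz =>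
    obtain ⟨a, x, hx, rfl⟩ := hz
    intro b p q
    exact U_L2 K hx a b p q
  | zero =>
    intro b p q
    rw [show p * (b * (0:A) - (0:A) * b) * q = 0 by noncomm_ring, map_zero]
  | add y z hy hz ihy ihz =>
    intro b p q
    rw [show p * (b * (y+z) - (y+z) * b) * q
      = p * (b * y - y * b) * q + p * (b * z - z * b) * q by noncomm_ring,
      map_add, ihy b p q, ihz b p q, add_zero]
  | smul k y hy ih =>
    intro b p q
    rw [show p * (b * (k•y) - (k•y) * b) * q = k • (p * (b * y - y * b) * q) by
        simp only [mul_smul_comm, smul_mul_assoc, smul_sub, sub_mul, mul_sub],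
      map_smul, ih b p q, smul_zero]

lemma U_L4 {z : FreeAlgebra K (Fin 3)} (hz : z ∈ L 4) :
    ∀ p q : A, fK K (p * z * q) = 0 := by
  induction hz using Submodule.span_induction with
  | mem w hw =>
    obtain ⟨b, y, hy, rfl⟩ := hw
    intro p q
    exact U_L3 K hy b p q
  | zero => intro p q; rw [mul_zero, zero_mul, map_zero]
  | add y z hy hz ihy ihz =>
    intro p q
    rw [show p * (y+z) * q = p * y * q + p * z * q by noncomm_ring,
      map_add, ihy p q, ihz p q, add_zero]
  | smul k y hy ih =>
    intro p q
    rw [show p * (k•y) * q = k • (p * y * q) by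
        simp only [mul_smul_comm, smul_mul_assoc], map_smul, ih p q, smul_zero]

lemma U_M4 {w : FreeAlgebra K (Fin 3)} (hw : w ∈ M 4) : fK K w = 0 := by
  induction hw using Submodule.span_induction with
  | mem x hx => obtain ⟨p, q, z, hz, rfl⟩ := hx; exact U_L4 K hz p q
  | zero => exact map_zero _
  | add y z hy hz ihy ihz => rw [map_add, ihy, ihz, add_zero]
  | smul k y hy ih => rw [map_smul, ih, smul_zero]
end P2e

section P2f
set_option linter.unusedSectionVars false
variable (K : Type*) [Field K] [CharZero K]
local notation "A" => FreeAlgebra K (Fin 3)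
local notation "L" => lowerCentral K (FreeAlgebra K (Fin 3))
local notation "M" => lcsIdeal K (FreeAlgebra K (Fin 3))
local notation "g" => (FreeAlgebra.ι K : Fin 3 → FreeAlgebra K (Fin 3))

lemma comm_mem_M2 (a b : A) : a * b - b * a ∈ M 2 := by
  refine Submodule.subset_span ⟨1, 1, a * b - b * a, ?_, by noncomm_ring⟩
  exact Submodule.subset_span ⟨a, b, by simp [lowerCentral], rfl⟩

lemma wit_mem : (g 0 * g 1 - g 1 * g 0) * (g 0 * g 2 - g 2 * g 0) ∈ M 2 * M 2 :=
  Submodule.mul_mem_mul (comm_mem_M2 K (g 0) (g 1)) (comm_mem_M2 K (g 0) (g 2))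

lemma wit_f : fK K ((g 0 * g 1 - g 1 * g 0) * (g 0 * g 2 - g 2 * g 0)) = 1 := by
  have hexp : (g 0 * g 1 - g 1 * g 0) * (g 0 * g 2 - g 2 * g 0)
      = wd K [0,1,0,2] - wd K [0,1,2,0] - wd K [1,0,0,2] + wd K [1,0,2,0] := by
    simp only [wd, List.map_cons, List.map_nil, List.prod_cons, List.prod_nil]
    noncomm_ring
  rw [hexp, map_add, map_sub, map_sub, fK_wd, fK_wd, fK_wd, fK_wd]
  rw [show Cf [0,1,0,2] = -1 from by decide, show Cf [0,1,2,0] = 0 from by decide,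
    show Cf [1,0,0,2] = -2 from by decide, show Cf [1,0,2,0] = 0 from by decide]
  norm_num

theorem part2 : ¬ M 2 * M 2 ≤ M 4 := by
  intro h
  have h0 := U_M4 K (h (wit_mem K))
  rw [wit_f K] at h0
  exact one_ne_zero h0
end P2f

/-- in the free associative algebra `A_3` on three generators,
`M_2(A_3) · M_2(A_3)` is contained in `M_3(A_3)` but not in `M_4(A_3)`;
that is, `I(A_3, (2,2)) = 3`. -/
theorem I_A3_two_two
    (K : Type*) [Field K] [CharZero K] :
    lcsIdeal K (FreeAlgebra K (Fin 3)) 2 * lcsIdeal K (FreeAlgebra K (Fin 3)) 2 ≤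
        lcsIdeal K (FreeAlgebra K (Fin 3)) 3 ∧
    ¬ lcsIdeal K (FreeAlgebra K (Fin 3)) 2 * lcsIdeal K (FreeAlgebra K (Fin 3)) 2 ≤
        lcsIdeal K (FreeAlgebra K (Fin 3)) 4 := by
  exact ⟨part1, part2 K⟩
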